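/- (Lower bound for block loss.) For the block contrastive loss with convex ℓ satisfying ℓ(0) = 1, L_un^{block}(f) ≥ E_{c⁺,c⁻∼ρ²} E_{x∼D_{c⁺}}[ℓ(f(x)ᵀ(μ_{c⁺} − μ_{c⁻}))] = (1−τ) L_sup^μ(f) + τ, hence L_sup^μ(f) ≤ (L_un^{block}(f) − τ)/(1−τ). -/

import Mathlib

open MeasureTheory
open scoped RealInnerProductSpace BigOperators

lemma my_int_of_bdd {Y E : Type*} [MeasurableSpace Y] [NormedAddCommGroup E]
    {ν : Measure Y} [IsFiniteMeasure ν] {g : Y → E}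
    (hm : AEStronglyMeasurable g ν) {M : ℝ} (hM : ∀ y, ‖g y‖ ≤ M) : Integrable g ν :=
  Integrable.mono' (integrable_const M) hm (Filter.Eventually.of_forall hM)

lemma my_abs_integral_le {Y : Type*} [MeasurableSpace Y] {ν : Measure Y}
    [IsProbabilityMeasure ν] {g : Y → ℝ} {M : ℝ} (hM : ∀ y, |g y| ≤ M) :
    |∫ y, g y ∂ν| ≤ M := by
  have := norm_integral_le_of_norm_le_const (μ := ν) (f := g) (C := M)
    (Filter.Eventually.of_forall (by simpa [Real.norm_eq_abs] using hM))
  simpa [Real.norm_eq_abs, measure_univ] using this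

lemma my_pi_map_eval {Y : Type*} [MeasurableSpace Y] (ν : Measure Y) [IsProbabilityMeasure ν]
    {n : ℕ} (i : Fin n) :
    (Measure.pi fun _ : Fin n => ν).map (Function.eval i) = ν := by
  ext s hs
  rw [Measure.map_apply (measurable_pi_apply i) hs]
  have h : Function.eval i ⁻¹' s =
      Set.pi Set.univ (Function.update (fun _ : Fin n => (Set.univ : Set Y)) i s) := by
    ext x
    simp only [Set.mem_preimage, Set.mem_pi, Set.mem_univ, forall_true_left, Function.eval]
    constructor
    · intro hx j
      by_cases hj : j = i
      · subst hj; simpa using hx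
      · simp [Function.update_of_ne hj]
    · intro hx
      have := hx i
      simpa using this
  rw [h, Measure.pi_pi]
  rw [Fintype.prod_eq_single i (fun j hj => by simp [Function.update_of_ne hj])]
  simp

lemma my_integral_eval {Y E : Type*} [MeasurableSpace Y] [NormedAddCommGroup E]
    [NormedSpace ℝ E] (ν : Measure Y) [IsProbabilityMeasure ν] {n : ℕ} (i : Fin n)
    (g : Y → E) (hg : AEStronglyMeasurable g ν) :
    ∫ xp : Fin n → Y, g (xp i) ∂(Measure.pi fun _ => ν) = ∫ y, g y ∂ν := by
  conv_rhs => rw [← my_pi_map_eval ν i]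
  rw [integral_map (measurable_pi_apply i).aemeasurable
    (by rw [my_pi_map_eval ν i]; exact hg)]

lemma my_jensen {Y : Type*} [MeasurableSpace Y] {ν : Measure Y} [IsProbabilityMeasure ν]
    {ℓ : ℝ → ℝ} (hℓ : ConvexOn ℝ Set.univ ℓ) (hℓc : Continuous ℓ)
    {g : Y → ℝ} (hg : Integrable g ν) (hgl : Integrable (fun y => ℓ (g y)) ν) :
    ℓ (∫ y, g y ∂ν) ≤ ∫ y, ℓ (g y) ∂ν :=
  hℓ.map_integral_le hℓc.continuousOn isClosed_univ
    (Filter.Eventually.of_forall fun _ => Set.mem_univ _) hg hgl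

lemma my_integral_avg {Y : Type*} [MeasurableSpace Y] {d : ℕ}
    (ν : Measure Y) [IsProbabilityMeasure ν] {n : ℕ}
    (f : Y → EuclideanSpace ℝ (Fin d)) (hfm : Measurable f) {R : ℝ} (hfb : ∀ y, ‖f y‖ ≤ R)
    (hn : 0 < n) :
    ∫ xp : Fin n → Y, (n : ℝ)⁻¹ • ∑ i, f (xp i) ∂(Measure.pi fun _ => ν) = ∫ y, f y ∂ν := by
  rw [integral_smul, integral_finset_sum (μ := Measure.pi fun _ => ν) Finset.univ
    (f := fun (i : Fin n) (a : Fin n → Y) => f (a i)) (fun i _ =>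
    my_int_of_bdd (hfm.comp (measurable_pi_apply i)).aestronglyMeasurable (fun xp => hfb _))]
  have h : ∀ i : Fin n, ∫ xp : Fin n → Y, f (xp i) ∂(Measure.pi fun _ => ν) = ∫ y, f y ∂ν :=
    fun i => my_integral_eval ν i f hfm.aestronglyMeasurable
  simp only [h, Finset.sum_const, Finset.card_univ, Fintype.card_fin]
  rw [← Nat.cast_smul_eq_nsmul ℝ, smul_smul, inv_mul_cancel₀ (by positivity), one_smul]

/-- Lower bound for the block contrastive loss: for convex `ℓ` with `ℓ(0) = 1`,
`L_un^{block}(f) ≥ E[ℓ(f(x)ᵀ(μ_{c⁺} − μ_{c⁻}))] = (1−τ)L_sup^μ(f) + τ`, hence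
`L_sup^μ(f) ≤ (L_un^{block}(f) − τ)/(1−τ)`. -/
theorem block_loss_lower_bound
    {X : Type*} [MeasurableSpace X] {C : Type*} [Fintype C] [DecidableEq C] {d : ℕ}
    (ρ : C → ℝ) (hρ0 : ∀ c, 0 ≤ ρ c) (hρ1 : ∑ c, ρ c = 1)
    (hτ : ∑ c, (ρ c) ^ 2 < 1)
    (D : C → Measure X) [hD : ∀ c, IsProbabilityMeasure (D c)]
    (f : X → EuclideanSpace ℝ (Fin d)) (hfm : Measurable f)
    (R : ℝ) (hfb : ∀ x, ‖f x‖ ≤ R)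
    (ℓ : ℝ → ℝ) (hℓ : ConvexOn ℝ Set.univ ℓ) (hℓc : Continuous ℓ) (hℓ0 : ℓ 0 = 1)
    (b : ℕ) (hb : 0 < b)
    (μ : C → EuclideanSpace ℝ (Fin d)) (hμ : ∀ c, μ c = ∫ x, f x ∂(D c))
    (Lblock : ℝ)
    (hLblock : Lblock = ∑ cp, ∑ cm, ρ cp * ρ cm *
      ∫ x, ∫ xp : Fin b → X, ∫ xm : Fin b → X,
        ℓ ⟪f x, (b : ℝ)⁻¹ • ∑ i, f (xp i) - (b : ℝ)⁻¹ • ∑ i, f (xm i)⟫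
        ∂(Measure.pi fun _ => D cm) ∂(Measure.pi fun _ => D cp) ∂(D cp))
    (Lsupμ : ℝ)
    (hLsupμ : Lsupμ = (1 / (1 - ∑ c, (ρ c) ^ 2)) *
      ∑ cp, ∑ cm, (if cp ≠ cm then ρ cp * ρ cm *
        ((1 / 2) * ∫ x, ℓ ⟪f x, μ cp - μ cm⟫ ∂(D cp) +
         (1 / 2) * ∫ x, ℓ ⟪f x, μ cm - μ cp⟫ ∂(D cm)) else 0)) :
    (∑ cp, ∑ cm, ρ cp * ρ cm * ∫ x, ℓ ⟪f x, μ cp - μ cm⟫ ∂(D cp)) ≤ Lblock ∧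
    (∑ cp, ∑ cm, ρ cp * ρ cm * ∫ x, ℓ ⟪f x, μ cp - μ cm⟫ ∂(D cp))
      = (1 - ∑ c, (ρ c) ^ 2) * Lsupμ + ∑ c, (ρ c) ^ 2 ∧
    Lsupμ ≤ (Lblock - ∑ c, (ρ c) ^ 2) / (1 - ∑ c, (ρ c) ^ 2) := by
  haveI := hD
  set τ : ℝ := ∑ c, (ρ c) ^ 2 with hτdef
  have hτ0 : (0:ℝ) < 1 - τ := by linarith
  set R' : ℝ := max R 0 with hR'
  have hR'0 : (0:ℝ) ≤ R' := le_max_right _ _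
  have hfb' : ∀ x, ‖f x‖ ≤ R' := fun x => (hfb x).trans (le_max_left _ _)
  set B : ℝ := R' * (R' + R') with hB
  obtain ⟨M, hM⟩ := (isCompact_Icc (a := -B) (b := B)).exists_bound_of_continuousOn
    hℓc.continuousOn
  have hMl : ∀ s : ℝ, |s| ≤ B → |ℓ s| ≤ M := by
    intro s hs
    have h1 := (abs_le.mp hs).1
    have h2 := (abs_le.mp hs).2
    simpa [Real.norm_eq_abs] using hM s (Set.mem_Icc.mpr ⟨h1, h2⟩)
  have hμb : ∀ c, ‖μ c‖ ≤ R' := by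
    intro c
    rw [hμ c]
    have := norm_integral_le_of_norm_le_const (μ := D c) (f := f) (C := R')
      (Filter.Eventually.of_forall hfb')
    simpa [measure_univ] using this
  set A : (Fin b → X) → EuclideanSpace ℝ (Fin d) :=
    fun xp => (b : ℝ)⁻¹ • ∑ i, f (xp i) with hA
  have hAm : Measurable A :=
    (Finset.measurable_sum Finset.univ fun i _ => hfm.comp (measurable_pi_apply i)).const_smul ((b : ℝ)⁻¹)
  have hAb : ∀ xp, ‖A xp‖ ≤ R' := by
    intro xp
    have hb' : (0:ℝ) < (b:ℝ) := by exact_mod_cast hb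
    calc ‖A xp‖ = (b:ℝ)⁻¹ * ‖∑ i, f (xp i)‖ := by
          rw [hA]; rw [norm_smul, Real.norm_eq_abs, abs_of_nonneg (by positivity)]
      _ ≤ (b:ℝ)⁻¹ * ∑ i : Fin b, ‖f (xp i)‖ := by
          gcongr
          exact norm_sum_le _ _
      _ ≤ (b:ℝ)⁻¹ * ∑ _i : Fin b, R' := by
          gcongr with i
          exact hfb' _
      _ = (b:ℝ)⁻¹ * ((b:ℝ) * R') := by
          simp [Finset.sum_const, Finset.card_univ, mul_comm]
      _ = R' := by field_simp
  have hAintble : ∀ c, Integrable A (Measure.pi fun _ : Fin b => D c) :=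
    fun c => my_int_of_bdd hAm.aestronglyMeasurable hAb
  have hAint : ∀ c, ∫ xp, A xp ∂(Measure.pi fun _ : Fin b => D c) = μ c := by
    intro c
    rw [hμ c]
    exact my_integral_avg (D c) f hfm hfb' hb
  have hib : ∀ (x : X) (u v : EuclideanSpace ℝ (Fin d)), ‖u‖ ≤ R' → ‖v‖ ≤ R' →
      |⟪f x, u - v⟫| ≤ B := by
    intro x u v hu hv
    calc |⟪f x, u - v⟫| ≤ ‖f x‖ * ‖u - v‖ := abs_real_inner_le_norm _ _
      _ ≤ R' * (R' + R') :=
          mul_le_mul (hfb' x) ((norm_sub_le u v).trans (add_le_add hu hv))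
            (norm_nonneg _) hR'0
  -- the key Jensen inequality per pair of classes
  have hpair : ∀ cp cm : C,
      ∫ x, ℓ ⟪f x, μ cp - μ cm⟫ ∂(D cp) ≤
      ∫ x, ∫ xp : Fin b → X, ∫ xm : Fin b → X,
        ℓ ⟪f x, A xp - A xm⟫
        ∂(Measure.pi fun _ => D cm) ∂(Measure.pi fun _ => D cp) ∂(D cp) := by
    intro cp cm
    set νp := (Measure.pi fun _ : Fin b => D cp) with hνp
    set νm := (Measure.pi fun _ : Fin b => D cm) with hνm
    have h1 : ∀ (x : X) (xp : Fin b → X),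
        ℓ ⟪f x, A xp - μ cm⟫ ≤ ∫ xm, ℓ ⟪f x, A xp - A xm⟫ ∂νm := by
      intro x xp
      have hgi : Integrable (fun xm => ⟪f x, A xp - A xm⟫) νm :=
        my_int_of_bdd ((measurable_const.sub hAm).const_inner (𝕜 := ℝ)
            (c := f x)).aestronglyMeasurable
          (fun xm => by
            simpa [Real.norm_eq_abs] using hib x (A xp) (A xm) (hAb xp) (hAb xm))
      have hgli : Integrable (fun xm => ℓ ⟪f x, A xp - A xm⟫) νm :=
        my_int_of_bdd (hℓc.measurable.comp ((measurable_const.sub hAm).const_inner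
            (𝕜 := ℝ) (c := f x))).aestronglyMeasurable
          (fun xm => by
            simpa [Real.norm_eq_abs] using hMl _ (hib x (A xp) (A xm) (hAb xp) (hAb xm)))
      have hj := my_jensen hℓ hℓc hgi hgli
      have heq : ∫ xm, ⟪f x, A xp - A xm⟫ ∂νm = ⟪f x, A xp - μ cm⟫ := by
        simp_rw [inner_sub_right]
        rw [integral_sub (integrable_const _) ((hAintble cm).const_inner _),
          integral_const, integral_inner (hAintble cm), hAint cm]
        simp
      rwa [heq] at hj
    have h2 : ∀ x : X,
        ℓ ⟪f x, μ cp - μ cm⟫ ≤ ∫ xp, ℓ ⟪f x, A xp - μ cm⟫ ∂νp := by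
      intro x
      have hgi : Integrable (fun xp => ⟪f x, A xp - μ cm⟫) νp :=
        my_int_of_bdd ((hAm.sub measurable_const).const_inner (𝕜 := ℝ)
            (c := f x)).aestronglyMeasurable
          (fun xp => by
            simpa [Real.norm_eq_abs] using hib x (A xp) (μ cm) (hAb xp) (hμb cm))
      have hgli : Integrable (fun xp => ℓ ⟪f x, A xp - μ cm⟫) νp :=
        my_int_of_bdd (hℓc.measurable.comp ((hAm.sub measurable_const).const_inner
            (𝕜 := ℝ) (c := f x))).aestronglyMeasurable
          (fun xp => by
            simpa [Real.norm_eq_abs] using hMl _ (hib x (A xp) (μ cm) (hAb xp) (hμb cm)))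
      have hj := my_jensen hℓ hℓc hgi hgli
      have heq : ∫ xp, ⟪f x, A xp - μ cm⟫ ∂νp = ⟪f x, μ cp - μ cm⟫ := by
        simp_rw [inner_sub_right]
        rw [integral_sub ((hAintble cp).const_inner _) (integrable_const _),
          integral_const, integral_inner (hAintble cp), hAint cp]
        simp
      rwa [heq] at hj
    have sm1 : ∀ x : X, StronglyMeasurable
        (fun p : (Fin b → X) × (Fin b → X) => ℓ ⟪f x, A p.1 - A p.2⟫) := by
      intro x
      exact (hℓc.measurable.comp (((hAm.comp measurable_fst).sub
        (hAm.comp measurable_snd)).const_inner (𝕜 := ℝ) (c := f x))).stronglyMeasurable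
    have h3 : ∀ x : X,
        ∫ xp, ℓ ⟪f x, A xp - μ cm⟫ ∂νp ≤
        ∫ xp, ∫ xm, ℓ ⟪f x, A xp - A xm⟫ ∂νm ∂νp := by
      intro x
      refine integral_mono ?_ ?_ (h1 x)
      · exact my_int_of_bdd (hℓc.measurable.comp ((hAm.sub measurable_const).const_inner
            (𝕜 := ℝ) (c := f x))).aestronglyMeasurable
          (fun xp => by
            simpa [Real.norm_eq_abs] using hMl _ (hib x (A xp) (μ cm) (hAb xp) (hμb cm)))
      · refine my_int_of_bdd (M := M) ((sm1 x).integral_prod_right').aestronglyMeasurable ?_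
        intro xp
        rw [Real.norm_eq_abs]
        exact my_abs_integral_le (fun xm => hMl _ (hib x (A xp) (A xm) (hAb xp) (hAb xm)))
    have sm2 : StronglyMeasurable
        (fun q : X × (Fin b → X) => ∫ xm, ℓ ⟪f q.1, A q.2 - A xm⟫ ∂νm) := by
      have : StronglyMeasurable (fun p : (X × (Fin b → X)) × (Fin b → X) =>
          ℓ ⟪f p.1.1, A p.1.2 - A p.2⟫) :=
        (hℓc.measurable.comp (Measurable.inner (𝕜 := ℝ)
          (hfm.comp (measurable_fst.comp measurable_fst))
          (((hAm.comp (measurable_snd.comp measurable_fst)).sub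
            (hAm.comp measurable_snd))))).stronglyMeasurable
      exact this.integral_prod_right'
    refine integral_mono ?_ ?_ (fun x => (h2 x).trans (h3 x))
    · exact my_int_of_bdd (hℓc.measurable.comp
          (hfm.inner_const (𝕜 := ℝ) (c := μ cp - μ cm))).aestronglyMeasurable
        (fun x => by
          simpa [Real.norm_eq_abs] using hMl _ (hib x (μ cp) (μ cm) (hμb cp) (hμb cm)))
    · refine my_int_of_bdd (M := M) (sm2.integral_prod_right').aestronglyMeasurable ?_
      intro x
      rw [Real.norm_eq_abs]
      refine my_abs_integral_le (fun xp => ?_)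
      exact my_abs_integral_le (fun xm => hMl _ (hib x (A xp) (A xm) (hAb xp) (hAb xm)))
  -- Part 1
  have part1 : (∑ cp, ∑ cm, ρ cp * ρ cm * ∫ x, ℓ ⟪f x, μ cp - μ cm⟫ ∂(D cp)) ≤ Lblock := by
    rw [hLblock]
    refine Finset.sum_le_sum fun cp _ => Finset.sum_le_sum fun cm _ => ?_
    exact mul_le_mul_of_nonneg_left (hpair cp cm) (mul_nonneg (hρ0 cp) (hρ0 cm))
  -- Part 2
  have hdiag : ∀ c : C, (∫ x, ℓ ⟪f x, μ c - μ c⟫ ∂(D c)) = 1 := by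
    intro c
    simp [sub_self, inner_zero_right, hℓ0]
  have key2 : (∑ cp, ∑ cm, ρ cp * ρ cm * ∫ x, ℓ ⟪f x, μ cp - μ cm⟫ ∂(D cp))
      = (∑ cp, ∑ cm, if cp ≠ cm then ρ cp * ρ cm * ∫ x, ℓ ⟪f x, μ cp - μ cm⟫ ∂(D cp) else 0)
        + τ := by
    rw [hτdef, ← Finset.sum_add_distrib]
    refine Finset.sum_congr rfl fun cp _ => ?_
    have h1 : ∀ cm, ρ cp * ρ cm * ∫ x, ℓ ⟪f x, μ cp - μ cm⟫ ∂(D cp)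
        = (if cp ≠ cm then ρ cp * ρ cm * ∫ x, ℓ ⟪f x, μ cp - μ cm⟫ ∂(D cp) else 0)
          + (if cp = cm then ρ cp ^ 2 else 0) := by
      intro cm
      by_cases h : cp = cm
      · subst h; simp [hdiag cp, sq, hℓ0]
      · simp [h]
    rw [Finset.sum_congr rfl fun cm _ => h1 cm, Finset.sum_add_distrib,
      Finset.sum_ite_eq Finset.univ cp fun _ => ρ cp ^ 2, if_pos (Finset.mem_univ cp)]
  have hswap : (∑ cp, ∑ cm, if cp ≠ cm then
        ρ cp * ρ cm * ∫ x, ℓ ⟪f x, μ cm - μ cp⟫ ∂(D cm) else 0)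
      = ∑ cp, ∑ cm, if cp ≠ cm then
        ρ cp * ρ cm * ∫ x, ℓ ⟪f x, μ cp - μ cm⟫ ∂(D cp) else 0 := by
    rw [Finset.sum_comm]
    refine Finset.sum_congr rfl fun cp _ => Finset.sum_congr rfl fun cm _ => ?_
    by_cases h : cp = cm
    · simp [h]
    · simp only [h, Ne.symm h, ne_eq, not_true_eq_false, not_false_eq_true, if_true]
      ring
  have hS : (∑ cp, ∑ cm, (if cp ≠ cm then ρ cp * ρ cm *
        ((1 / 2) * ∫ x, ℓ ⟪f x, μ cp - μ cm⟫ ∂(D cp) +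
         (1 / 2) * ∫ x, ℓ ⟪f x, μ cm - μ cp⟫ ∂(D cm)) else 0))
      = ∑ cp, ∑ cm, if cp ≠ cm then
        ρ cp * ρ cm * ∫ x, ℓ ⟪f x, μ cp - μ cm⟫ ∂(D cp) else 0 := by
    have e1 : ∀ cp cm : C, (if cp ≠ cm then ρ cp * ρ cm *
        ((1 / 2) * ∫ x, ℓ ⟪f x, μ cp - μ cm⟫ ∂(D cp) +
         (1 / 2) * ∫ x, ℓ ⟪f x, μ cm - μ cp⟫ ∂(D cm)) else 0)
        = (1/2) * (if cp ≠ cm then ρ cp * ρ cm * ∫ x, ℓ ⟪f x, μ cp - μ cm⟫ ∂(D cp) else 0)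
          + (1/2) * (if cp ≠ cm then ρ cp * ρ cm * ∫ x, ℓ ⟪f x, μ cm - μ cp⟫ ∂(D cm) else 0) := by
      intro cp cm
      by_cases h : cp = cm
      · simp [h]
      · simp only [h, ne_eq, not_false_eq_true, if_true]
        ring
    simp_rw [e1]
    rw [Finset.sum_congr rfl fun cp _ => Finset.sum_add_distrib, Finset.sum_add_distrib]
    simp_rw [← Finset.mul_sum]
    rw [hswap]
    ring
  have part2 : (∑ cp, ∑ cm, ρ cp * ρ cm * ∫ x, ℓ ⟪f x, μ cp - μ cm⟫ ∂(D cp))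
      = (1 - τ) * Lsupμ + τ := by
    rw [key2, hLsupμ, hS]
    field_simp
  refine ⟨part1, part2, ?_⟩
  rw [le_div_iff₀ hτ0]
  have h := part2 ▸ part1
  nlinarith [h]
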